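/- Let B be a nonempty family of subsets of a finite set E and let μ0 be a Rayleigh probability measure on B with full support, i.e., for every weight vector w ∈ (0,∞)^E the tilted measure μ_w(A) ∝ μ0(A)·∏_{e∈A} w_e satisfies P_{B∼μ_w}[T ⊆ B]·P_{B∼μ_w}[e ∈ B] ≥ P_{B∼μ_w}[T ∪ {e} ⊆ B] for all e ∈ E and T ⊆ E∖{e}. Then for every q in the convex hull of the indicator vectors {1_A : A ∈ B}, there exists a Rayleigh probability measure μ on B (obtainable as a limit of tilted measures μ_{w^(t)}) whose marginals satisfy P_{B∼μ}[e ∈ B] = q_e for every e ∈ E. -/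

import Mathlib

open Finset

/-- Probability of the event `P` under the tilt of the measure `μ` by the weight vector `w`:
`μ_w(A) ∝ μ(A) · ∏_{e∈A} w_e`. -/
noncomputable def tiltProb {E : Type*} [Fintype E] [DecidableEq E]
    (μ : Finset E → ℝ) (w : E → ℝ) (P : Finset E → Prop) [DecidablePred P] : ℝ :=
  (∑ A ∈ univ.filter P, μ A * ∏ e ∈ A, w e) / (∑ A : Finset E, μ A * ∏ e ∈ A, w e)

/-- `μ` is Rayleigh: every positive tilt of `μ` satisfies the Rayleigh inequality
`P[T ⊆ B] · P[e ∈ B] ≥ P[T ∪ {e} ⊆ B]`. -/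
def IsRayleigh {E : Type*} [Fintype E] [DecidableEq E] (μ : Finset E → ℝ) : Prop :=
  ∀ w : E → ℝ, (∀ e, 0 < w e) → ∀ e : E, ∀ T : Finset E, e ∉ T →
    tiltProb μ w (fun A => insert e T ⊆ A) ≤
      tiltProb μ w (fun A => T ⊆ A) * tiltProb μ w (fun A => e ∈ A)

open Filter Topology

section Aux

variable {E : Type*} [Fintype E] [DecidableEq E]

/-- Partition function of the tilt of `μ0` by the weights `exp (s e)`. -/
noncomputable def myZ (μ0 : Finset E → ℝ) (s : E → ℝ) : ℝ :=
  ∑ A : Finset E, μ0 A * Real.exp (∑ e ∈ A, s e)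

omit [DecidableEq E] in
lemma myZ_pos {μ0 : Finset E → ℝ} (h0 : ∀ A, 0 ≤ μ0 A) {A0 : Finset E} (hA0 : μ0 A0 ≠ 0)
    (s : E → ℝ) : 0 < myZ μ0 s := by
  apply Finset.sum_pos' (fun A _ => mul_nonneg (h0 A) (Real.exp_nonneg _))
  exact ⟨A0, mem_univ _, mul_pos (lt_of_le_of_ne (h0 A0) (Ne.symm hA0)) (Real.exp_pos _)⟩

omit [DecidableEq E] in
lemma myZ_continuous (μ0 : Finset E → ℝ) : Continuous (myZ μ0) := by
  apply continuous_finset_sum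
  intro A _
  exact continuous_const.mul ((continuous_finset_sum _ (fun e _ => continuous_apply e)).rexp)

/-- The tilt of a tilt of `μ0` is a tilt of `μ0`. -/
lemma tiltProb_tilt (μ0 : Finset E → ℝ) (s : E → ℝ) (hZ : myZ μ0 s ≠ 0) (w : E → ℝ)
    (P : Finset E → Prop) [DecidablePred P] :
    tiltProb (fun A => μ0 A * Real.exp (∑ e ∈ A, s e) / myZ μ0 s) w P
      = tiltProb μ0 (fun e => Real.exp (s e) * w e) P := by
  have key : ∀ A : Finset E,
      μ0 A * Real.exp (∑ e ∈ A, s e) / myZ μ0 s * ∏ e ∈ A, w e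
        = (μ0 A * ∏ e ∈ A, Real.exp (s e) * w e) / myZ μ0 s := by
    intro A
    rw [Finset.prod_mul_distrib, ← Real.exp_sum]
    ring
  unfold tiltProb
  simp only [key]
  rw [← Finset.sum_div, ← Finset.sum_div, div_div_div_cancel_right₀ hZ]

/-- First-order condition at a minimizer of the penalized dual objective. -/
lemma foc (μ0 : Finset E → ℝ) (h0 : ∀ A, 0 ≤ μ0 A) {A0 : Finset E} (hA0 : μ0 A0 ≠ 0)
    (q : E → ℝ) (ε : ℝ) (s : E → ℝ)
    (hmin : ∀ y : E → ℝ,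
      Real.log (myZ μ0 s) - (∑ e', q e' * s e') + ε * ∑ e', (s e') ^ 2
        ≤ Real.log (myZ μ0 y) - (∑ e', q e' * y e') + ε * ∑ e', (y e') ^ 2)
    (e : E) :
    (∑ A ∈ univ.filter (fun A => e ∈ A), μ0 A * Real.exp (∑ e' ∈ A, s e')) / myZ μ0 s
      = q e - 2 * ε * s e := by
  classical
  set a : Finset E → ℝ := fun A => ∑ e' ∈ A, s e' with ha
  set b : Finset E → ℝ := fun A => if e ∈ A then (1:ℝ) else 0 with hb
  set φ : ℝ → ℝ := fun t =>
    Real.log (∑ A : Finset E, μ0 A * Real.exp (a A + b A * t))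
      - ((∑ e', q e' * s e') + q e * t)
      + ε * ((∑ e' ∈ univ.erase e, (s e') ^ 2) + (s e + t) ^ 2) with hφdef
  set y : ℝ → (E → ℝ) := fun t e' => s e' + t * (if e' = e then (1:ℝ) else 0) with hy
  have hsumA : ∀ (t : ℝ) (A : Finset E), (∑ e' ∈ A, y t e') = a A + b A * t := by
    intro t A
    rw [hy, ha, hb]
    simp only [Finset.sum_add_distrib]
    congr 1
    simp only [mul_ite, mul_one, mul_zero, ite_mul, one_mul, zero_mul]
    rw [Finset.sum_ite_eq' A e (fun _ => t)]
  have hqsum : ∀ t : ℝ, (∑ e', q e' * y t e') = (∑ e', q e' * s e') + q e * t := by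
    intro t
    rw [hy]
    simp only [mul_add, Finset.sum_add_distrib]
    congr 1
    simp only [mul_ite, mul_one, mul_zero, ← mul_assoc]
    rw [Finset.sum_ite_eq' univ e (fun e' => q e' * t)]
    simp [mul_comm]
  have hsqsum : ∀ t : ℝ, (∑ e', (y t e') ^ 2)
      = (∑ e' ∈ univ.erase e, (s e') ^ 2) + (s e + t) ^ 2 := by
    intro t
    rw [← Finset.sum_erase_add univ _ (mem_univ e)]
    congr 1
    · apply Finset.sum_congr rfl
      intro e' he'
      rw [hy]
      simp [Finset.ne_of_mem_erase he']
    · rw [hy]; simp [mul_comm]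
  have hval : ∀ t : ℝ, φ t = Real.log (myZ μ0 (y t)) - (∑ e', q e' * y t e')
      + ε * ∑ e', (y t e') ^ 2 := by
    intro t
    rw [hφdef, myZ, hqsum, hsqsum]
    simp only [hsumA]
  have hy0 : y 0 = s := by funext e'; simp [hy]
  have hlocmin : IsLocalMin φ 0 := by
    apply Filter.Eventually.of_forall
    intro t
    rw [hval t, hval 0, hy0]
    exact hmin (y t)
  have hZne : (∑ A : Finset E, μ0 A * Real.exp (a A + b A * 0)) ≠ 0 := by
    simp only [mul_zero, add_zero]
    exact (myZ_pos h0 hA0 s).ne'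
  have hZder : HasDerivAt (fun t => ∑ A : Finset E, μ0 A * Real.exp (a A + b A * t))
      (∑ A : Finset E, μ0 A * (Real.exp (a A + b A * 0) * (b A * 1))) 0 := by
    apply HasDerivAt.fun_sum
    intro A _
    exact ((((hasDerivAt_id 0).const_mul (b A)).const_add (a A)).exp).const_mul (μ0 A)
  have hφder : HasDerivAt φ
      ((∑ A : Finset E, μ0 A * (Real.exp (a A + b A * 0) * (b A * 1)))
          / (∑ A : Finset E, μ0 A * Real.exp (a A + b A * 0))
        - q e + ε * (2 * (s e + 0) ^ 1 * 1)) 0 := by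
    have h1 := hZder.log hZne
    have h2 : HasDerivAt (fun t : ℝ => (∑ e', q e' * s e') + q e * t) (q e) 0 := by
      simpa using ((hasDerivAt_id 0).const_mul (q e)).const_add (∑ e', q e' * s e')
    have h3 : HasDerivAt (fun t : ℝ =>
        ε * ((∑ e' ∈ univ.erase e, (s e') ^ 2) + (s e + t) ^ 2))
        (ε * (2 * (s e + 0) ^ 1 * 1)) 0 :=
      ((((hasDerivAt_id 0).const_add (s e)).pow 2).const_add
        (∑ e' ∈ univ.erase e, (s e') ^ 2)).const_mul ε
    exact (h1.sub h2).add h3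
  have hd0 := hlocmin.deriv_eq_zero
  rw [hφder.deriv] at hd0
  have hnum : (∑ A : Finset E, μ0 A * (Real.exp (a A + b A * 0) * (b A * 1)))
      = ∑ A ∈ univ.filter (fun A => e ∈ A), μ0 A * Real.exp (∑ e' ∈ A, s e') := by
    rw [Finset.sum_filter]
    apply Finset.sum_congr rfl
    intro A _
    rw [hb, ha]
    by_cases hA : e ∈ A <;> simp [hA]
  have hden : (∑ A : Finset E, μ0 A * Real.exp (a A + b A * 0)) = myZ μ0 s := by
    simp only [mul_zero, add_zero]; rfl
  rw [hnum, hden] at hd0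
  linarith

lemma swap_sum (c : Finset E → ℝ) (q : E → ℝ)
    (hcq : ∀ e, q e = ∑ A ∈ univ.filter (fun A => e ∈ A), c A) (s : E → ℝ) :
    (∑ A : Finset E, c A * ∑ e' ∈ A, s e') = ∑ e, q e * s e := by
  have h1 : ∀ A : Finset E, c A * ∑ e' ∈ A, s e'
      = ∑ e', (if e' ∈ A then c A * s e' else 0) := by
    intro A
    rw [Finset.mul_sum, Finset.sum_ite_mem, Finset.univ_inter]
  simp only [h1]
  rw [Finset.sum_comm]
  apply Finset.sum_congr rfl
  intro e _
  rw [hcq e, Finset.sum_filter, Finset.sum_mul]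
  apply Finset.sum_congr rfl
  intro A _
  by_cases hA : e ∈ A <;> simp [hA, mul_comm]

/-- Convexity (Jensen) lower bound for `log Z` in terms of the target marginals. -/
lemma logZ_lower (μ0 : Finset E → ℝ) (h0 : ∀ A, 0 ≤ μ0 A)
    (c : Finset E → ℝ) (hc0 : ∀ A, 0 ≤ c A) (hcμ : ∀ A, c A ≠ 0 → μ0 A ≠ 0)
    (hcsum : (∑ A : Finset E, c A) = 1)
    (q : E → ℝ) (hcq : ∀ e, q e = ∑ A ∈ univ.filter (fun A => e ∈ A), c A)
    (s : E → ℝ) :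
    (∑ A : Finset E, (if c A = 0 then 0 else c A * (Real.log (μ0 A) - Real.log (c A))))
      + ∑ e, q e * s e ≤ Real.log (myZ μ0 s) := by
  classical
  have hA0 : ∃ A0, μ0 A0 ≠ 0 := by
    by_contra h
    push_neg at h
    have : ∀ A, c A = 0 := fun A => by
      by_contra hc; exact (hcμ A hc) (h A)
    simp [this] at hcsum
  obtain ⟨A0, hA0⟩ := hA0
  set x : Finset E → ℝ := fun A => μ0 A * Real.exp (∑ e' ∈ A, s e') with hx
  set z : Finset E → ℝ := fun A => if c A = 0 then 1 else x A / c A with hz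
  have hxpos : ∀ A, c A ≠ 0 → 0 < x A := fun A hA =>
    mul_pos (lt_of_le_of_ne (h0 A) (Ne.symm (hcμ A hA))) (Real.exp_pos _)
  have hzpos : ∀ A, 0 < z A := by
    intro A
    rw [hz]
    by_cases hA : c A = 0
    · simp [hA]
    · simp only [hA, if_false]
      exact div_pos (hxpos A hA) (lt_of_le_of_ne (hc0 A) (Ne.symm hA))
  have gm := Real.geom_mean_le_arith_mean_weighted univ c z
    (fun A _ => hc0 A) hcsum (fun A _ => (hzpos A).le)
  have hrhs : (∑ A : Finset E, c A * z A) ≤ myZ μ0 s := by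
    apply Finset.sum_le_sum
    intro A _
    rw [hz]
    by_cases hA : c A = 0
    · simp only [hA, if_true, mul_one, zero_mul]
      exact mul_nonneg (h0 A) (Real.exp_nonneg _)
    · simp only [hA, if_false]
      rw [mul_comm, div_mul_cancel₀ _ hA]
  have hprod : (∏ A : Finset E, z A ^ c A)
      = Real.exp (∑ A : Finset E, Real.log (z A) * c A) := by
    rw [Real.exp_sum]
    exact Finset.prod_congr rfl fun A _ => Real.rpow_def_of_pos (hzpos A) (c A)
  have hsum : (∑ A : Finset E, Real.log (z A) * c A)
      = (∑ A : Finset E, (if c A = 0 then 0 else c A * (Real.log (μ0 A) - Real.log (c A))))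
        + ∑ A : Finset E, c A * ∑ e' ∈ A, s e' := by
    rw [← Finset.sum_add_distrib]
    apply Finset.sum_congr rfl
    intro A _
    by_cases hA : c A = 0
    · simp [hA, hz]
    · simp only [hA, if_false, hz]
      rw [Real.log_div (hxpos A hA).ne' hA, hx, Real.log_mul (hcμ A hA) (Real.exp_ne_zero _),
        Real.log_exp]
      ring
  rw [(Real.le_log_iff_exp_le (myZ_pos h0 hA0 s))]
  calc Real.exp ((∑ A : Finset E, (if c A = 0 then 0 else
          c A * (Real.log (μ0 A) - Real.log (c A)))) + ∑ e, q e * s e)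
      = ∏ A : Finset E, z A ^ c A := by
        rw [hprod, hsum, swap_sum c q hcq s]
    _ ≤ ∑ A : Finset E, c A * z A := gm
    _ ≤ myZ μ0 s := hrhs

omit [DecidableEq E] in
lemma sq_norm_le_sum (y : E → ℝ) : ‖y‖ ^ 2 ≤ ∑ e, (y e) ^ 2 := by
  have h1 : ‖y‖ ≤ Real.sqrt (∑ e, (y e) ^ 2) := by
    rw [pi_norm_le_iff_of_nonneg (Real.sqrt_nonneg _)]
    intro e
    rw [Real.norm_eq_abs, ← Real.sqrt_sq_eq_abs]
    exact Real.sqrt_le_sqrt (Finset.single_le_sum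
      (fun e' _ => sq_nonneg (y e')) (mem_univ e))
  calc ‖y‖ ^ 2 ≤ Real.sqrt (∑ e, (y e) ^ 2) ^ 2 :=
        pow_le_pow_left₀ (norm_nonneg _) h1 2
    _ = ∑ e, (y e) ^ 2 := Real.sq_sqrt (Finset.sum_nonneg fun e _ => sq_nonneg _)

omit [DecidableEq E] in
/-- Existence of a minimizer of the penalized dual objective. -/
lemma exists_min (μ0 : Finset E → ℝ) (h0 : ∀ A, 0 ≤ μ0 A) {A0 : Finset E} (hA0 : μ0 A0 ≠ 0)
    (q : E → ℝ) (D : ℝ)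
    (hlb : ∀ s : E → ℝ, D + ∑ e, q e * s e ≤ Real.log (myZ μ0 s))
    (ε : ℝ) (hε : 0 < ε) :
    ∃ s : E → ℝ, ∀ y : E → ℝ,
      Real.log (myZ μ0 s) - (∑ e', q e' * s e') + ε * ∑ e', (s e') ^ 2
        ≤ Real.log (myZ μ0 y) - (∑ e', q e' * y e') + ε * ∑ e', (y e') ^ 2 := by
  set g : (E → ℝ) → ℝ := fun y =>
    Real.log (myZ μ0 y) - (∑ e', q e' * y e') + ε * ∑ e', (y e') ^ 2 with hg
  have hcont : Continuous g := by
    apply Continuous.add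
    · apply Continuous.sub
      · rw [continuous_iff_continuousAt]
        intro y
        exact ContinuousAt.log (myZ_continuous μ0).continuousAt (myZ_pos h0 hA0 y).ne'
      · exact continuous_finset_sum _ fun e _ => continuous_const.mul (continuous_apply e)
    · exact continuous_const.mul
        (continuous_finset_sum _ fun e _ => (continuous_apply e).pow 2)
  have hcoer : Tendsto g (cocompact (E → ℝ)) atTop := by
    have hmono : ∀ y : E → ℝ, D + ε * ‖y‖ ^ 2 ≤ g y := by
      intro y
      have h1 := hlb y
      have h2 : ε * ‖y‖ ^ 2 ≤ ε * ∑ e', (y e') ^ 2 :=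
        mul_le_mul_of_nonneg_left (sq_norm_le_sum y) hε.le
      rw [hg]
      dsimp only
      linarith
    have haux : Tendsto (fun y : E → ℝ => D + ε * ‖y‖ ^ 2) (cocompact (E → ℝ)) atTop := by
      apply Tendsto.comp (g := fun r : ℝ => D + ε * r ^ 2)
      · apply tendsto_atTop_add_const_left
        exact (tendsto_pow_atTop two_ne_zero).const_mul_atTop hε
      · exact tendsto_norm_cocompact_atTop
    exact tendsto_atTop_mono hmono haux
  obtain ⟨s, hs⟩ := hcont.exists_forall_le hcoer
  exact ⟨s, hs⟩

end Aux

theorem stmt_12 {E : Type*} [Fintype E] [DecidableEq E]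
    (B : Finset (Finset E)) (hB : B.Nonempty)
    -- μ0 is a full-support Rayleigh probability measure on B
    (μ0 : Finset E → ℝ)
    (h0 : ∀ A, 0 ≤ μ0 A)
    (hsupp : ∀ A : Finset E, μ0 A ≠ 0 ↔ A ∈ B)
    (hsum : (∑ A : Finset E, μ0 A) = 1)
    (hray : IsRayleigh μ0)
    -- q is in the convex hull of the indicator vectors {1_A : A ∈ B}
    (q : E → ℝ)
    (hq : ∃ c : Finset E → ℝ,
      (∀ A, 0 ≤ c A) ∧ (∀ A, c A ≠ 0 → A ∈ B) ∧ (∑ A : Finset E, c A) = 1 ∧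
      (∀ e, q e = ∑ A ∈ univ.filter (fun A => e ∈ A), c A)) :
    -- there is a Rayleigh probability measure on B with marginals q
    ∃ μ : Finset E → ℝ,
      (∀ A, 0 ≤ μ A) ∧
      (∀ A, μ A ≠ 0 → A ∈ B) ∧
      (∑ A : Finset E, μ A) = 1 ∧
      IsRayleigh μ ∧
      (∀ e, ∑ A ∈ univ.filter (fun A => e ∈ A), μ A = q e) := by
  classical
  obtain ⟨c, hc0, hcB, hcsum, hcq⟩ := hq
  obtain ⟨A0, hA0B⟩ := hB
  have hA0 : μ0 A0 ≠ 0 := (hsupp A0).2 hA0B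
  have hZpos : ∀ s : E → ℝ, 0 < myZ μ0 s := fun s => myZ_pos h0 hA0 s
  set D : ℝ := ∑ A : Finset E,
    (if c A = 0 then 0 else c A * (Real.log (μ0 A) - Real.log (c A))) with hD
  have hlb : ∀ s : E → ℝ, D + ∑ e, q e * s e ≤ Real.log (myZ μ0 s) :=
    logZ_lower μ0 h0 c hc0 (fun A hA => (hsupp A).2 (hcB A hA)) hcsum q hcq
  set C : ℝ := Real.log (myZ μ0 0) - D with hC
  set ε : ℕ → ℝ := fun n => 1 / (n + 1 : ℝ) with hε
  have hεpos : ∀ n, 0 < ε n := fun n => by positivity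
  -- get, for each n, an approximate dual optimizer
  have hsn : ∀ n : ℕ, ∃ s : E → ℝ,
      (ε n * ∑ e, (s e) ^ 2 ≤ C) ∧
      (∀ e : E, (∑ A ∈ univ.filter (fun A => e ∈ A),
          μ0 A * Real.exp (∑ e' ∈ A, s e')) / myZ μ0 s = q e - 2 * ε n * s e) := by
    intro n
    obtain ⟨s, hs⟩ := exists_min μ0 h0 hA0 q D hlb (ε n) (hεpos n)
    refine ⟨s, ?_, foc μ0 h0 hA0 q (ε n) s hs⟩
    have h1 := hs 0
    have h2 := hlb s
    simp only [Pi.zero_apply, mul_zero, Finset.sum_const_zero, sub_zero,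
      zero_pow, ne_eq, OfNat.ofNat_ne_zero, not_false_eq_true] at h1
    rw [hC]
    linarith
  choose sn hsn1 hsn2 using hsn
  -- the tilted measures
  set ν : ℕ → Finset E → ℝ :=
    fun n A => μ0 A * Real.exp (∑ e ∈ A, sn n e) / myZ μ0 (sn n) with hν
  have hν0 : ∀ n A, 0 ≤ ν n A := fun n A =>
    div_nonneg (mul_nonneg (h0 A) (Real.exp_nonneg _)) (hZpos _).le
  have hνsum : ∀ n, (∑ A : Finset E, ν n A) = 1 := by
    intro n
    rw [hν]
    rw [← Finset.sum_div]
    exact div_self (hZpos (sn n)).ne'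
  have hν1 : ∀ n A, ν n A ≤ 1 := by
    intro n A
    rw [← hνsum n]
    exact Finset.single_le_sum (fun A' _ => hν0 n A') (mem_univ A)
  have hmarg : ∀ n (e : E),
      (∑ A ∈ univ.filter (fun A => e ∈ A), ν n A) = q e - 2 * ε n * sn n e := by
    intro n e
    rw [hν, ← Finset.sum_div]
    exact hsn2 n e
  have hC0 : 0 ≤ C := le_trans (mul_nonneg (hεpos 0).le
    (Finset.sum_nonneg fun e _ => sq_nonneg _)) (hsn1 0)
  have hbnd : ∀ n (e : E), |2 * ε n * sn n e| ≤ 2 * Real.sqrt (C * ε n) := by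
    intro n e
    have h1 : (sn n e) ^ 2 ≤ ∑ e', (sn n e') ^ 2 :=
      Finset.single_le_sum (f := fun e' => (sn n e') ^ 2)
        (fun e' _ => sq_nonneg _) (mem_univ e)
    have h2 : (ε n * sn n e) ^ 2 ≤ C * ε n := by
      have : (ε n * sn n e) ^ 2 = ε n * (ε n * (sn n e) ^ 2) := by ring
      rw [this]
      calc ε n * (ε n * (sn n e) ^ 2) ≤ ε n * C := by
            apply mul_le_mul_of_nonneg_left _ (hεpos n).le
            calc ε n * (sn n e) ^ 2 ≤ ε n * ∑ e', (sn n e') ^ 2 :=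
                  mul_le_mul_of_nonneg_left h1 (hεpos n).le
              _ ≤ C := hsn1 n
        _ = C * ε n := mul_comm _ _
    have h3 : |ε n * sn n e| ≤ Real.sqrt (C * ε n) := by
      rw [← Real.sqrt_sq_eq_abs]
      exact Real.sqrt_le_sqrt h2
    calc |2 * ε n * sn n e| = 2 * |ε n * sn n e| := by
          rw [mul_assoc, abs_mul]
          simp
      _ ≤ 2 * Real.sqrt (C * ε n) := by linarith
  -- compactness: extract a convergent subsequence
  have hK : IsCompact (Set.Icc (0 : Finset E → ℝ) 1) := isCompact_Icc
  have hmem : ∀ n, ν n ∈ Set.Icc (0 : Finset E → ℝ) 1 := fun n =>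
    Set.mem_Icc.2 ⟨fun A => hν0 n A, fun A => hν1 n A⟩
  obtain ⟨μ, hμmem, ψ, hψmono, hψtend⟩ := hK.tendsto_subseq hmem
  have hcoord : ∀ A : Finset E, Tendsto (fun k => ν (ψ k) A) atTop (𝓝 (μ A)) :=
    fun A => ((continuous_apply A).tendsto μ).comp hψtend
  have hεψ : Tendsto (fun k => ε (ψ k)) atTop (𝓝 0) := by
    have h1 : Tendsto (fun n : ℕ => (1 : ℝ) / (n + 1)) atTop (𝓝 0) :=
      tendsto_one_div_add_atTop_nhds_zero_nat
    exact h1.comp hψmono.tendsto_atTop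
  -- the five required properties
  have prop1 : ∀ A, 0 ≤ μ A := fun A =>
    ge_of_tendsto' (hcoord A) (fun k => hν0 (ψ k) A)
  have prop2 : ∀ A, μ A ≠ 0 → A ∈ B := by
    intro A hμA
    by_contra hAB
    have hz : μ0 A = 0 := by
      by_contra h; exact hAB ((hsupp A).1 h)
    have : ∀ k, ν (ψ k) A = 0 := by
      intro k; rw [hν]; simp [hz]
    exact hμA (tendsto_nhds_unique (hcoord A) (by simp only [this]; exact tendsto_const_nhds))
  have prop3 : (∑ A : Finset E, μ A) = 1 := by
    have h1 : Tendsto (fun k => ∑ A : Finset E, ν (ψ k) A) atTop (𝓝 (∑ A : Finset E, μ A)) :=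
      tendsto_finset_sum _ (fun A _ => hcoord A)
    have h2 : Tendsto (fun k => ∑ A : Finset E, ν (ψ k) A) atTop (𝓝 1) := by
      simp only [hνsum]; exact tendsto_const_nhds
    exact tendsto_nhds_unique h1 h2
  have prop5 : ∀ e : E, (∑ A ∈ univ.filter (fun A => e ∈ A), μ A) = q e := by
    intro e
    have h1 : Tendsto (fun k => ∑ A ∈ univ.filter (fun A => e ∈ A), ν (ψ k) A) atTop
        (𝓝 (∑ A ∈ univ.filter (fun A => e ∈ A), μ A)) :=
      tendsto_finset_sum _ (fun A _ => hcoord A)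
    have herr : Tendsto (fun k => 2 * ε (ψ k) * sn (ψ k) e) atTop (𝓝 0) := by
      apply squeeze_zero_norm (fun k => hbnd (ψ k) e)
      have h3 : Tendsto (fun k => C * ε (ψ k)) atTop (𝓝 0) := by
        simpa using hεψ.const_mul C
      have h4 : Tendsto (fun k => Real.sqrt (C * ε (ψ k))) atTop (𝓝 0) := by
        have := (Real.continuous_sqrt.tendsto' 0 0 Real.sqrt_zero).comp h3
        exact this
      simpa using h4.const_mul 2
    have h2 : Tendsto (fun k => ∑ A ∈ univ.filter (fun A => e ∈ A), ν (ψ k) A) atTop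
        (𝓝 (q e)) := by
      simp only [hmarg]
      simpa using (tendsto_const_nhds (x := q e) (f := atTop)).sub herr
    exact tendsto_nhds_unique h1 h2
  -- Rayleigh property of the limit
  have hden_pos : (0:ℝ) < ∑ A : Finset E, μ A * ∏ e ∈ A, (1:ℝ) → True := fun _ => trivial
  have prop4 : IsRayleigh μ := by
    intro w hw e T heT
    have hwpos : ∀ n : ℕ, ∀ e' : E, 0 < Real.exp (sn n e') * w e' :=
      fun n e' => mul_pos (Real.exp_pos _) (hw e')
    -- each ν n satisfies the Rayleigh inequality for w
    have hstep : ∀ k : ℕ,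
        tiltProb (ν (ψ k)) w (fun A => insert e T ⊆ A) ≤
          tiltProb (ν (ψ k)) w (fun A => T ⊆ A) * tiltProb (ν (ψ k)) w (fun A => e ∈ A) := by
      intro k
      have ht : ∀ (P : Finset E → Prop) [DecidablePred P],
          tiltProb (ν (ψ k)) w P
            = tiltProb μ0 (fun e' => Real.exp (sn (ψ k) e') * w e') P := by
        intro P _
        rw [hν]
        exact tiltProb_tilt μ0 (sn (ψ k)) (hZpos _).ne' w P
      rw [ht, ht, ht]
      exact hray _ (hwpos (ψ k)) e T heT
    -- limit of tiltProb
    have hdenpos : (0:ℝ) < ∑ A : Finset E, μ A * ∏ e' ∈ A, w e' := by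
      apply Finset.sum_pos'
        (fun A _ => mul_nonneg (prop1 A) (Finset.prod_nonneg fun e' _ => (hw e').le))
      have hex : ∃ A : Finset E, μ A ≠ 0 := by
        by_contra h
        push_neg at h
        simp [h] at prop3
      obtain ⟨A1, hA1⟩ := hex
      exact ⟨A1, mem_univ _, mul_pos (lt_of_le_of_ne (prop1 A1) (Ne.symm hA1))
        (Finset.prod_pos fun e' _ => hw e')⟩
    have htend : ∀ (P : Finset E → Prop) [DecidablePred P],
        Tendsto (fun k => tiltProb (ν (ψ k)) w P) atTop (𝓝 (tiltProb μ w P)) := by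
      intro P _
      unfold tiltProb
      apply Tendsto.div
      · exact tendsto_finset_sum _ (fun A _ => (hcoord A).mul_const _)
      · exact tendsto_finset_sum _ (fun A _ => (hcoord A).mul_const _)
      · exact hdenpos.ne'
    exact le_of_tendsto_of_tendsto' (htend _)
      ((htend _).mul (htend _)) hstep
  exact ⟨μ, prop1, prop2, prop3, prop4, prop5⟩
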